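/- In the twisted group algebra A(S_n), for any g ∈ S_n and 1 ≤ a < b ≤ n: g* · t_{b,a}* = (∏_{a < j ≤ b, g(a) > g(j)} X_{g(a)g(j)}·X_{g(j)g(a)}) · (g·t_{b,a})*, where t_{b,a} is the cycle m↦m+1 (a ≤ m ≤ b-1), b↦a. -/

import Mathlib

open MvPolynomial

/-- The polynomial ring `R_n = ℂ[X_{ab} : 1 ≤ a,b ≤ n]` in `n²` commuting variables. -/
abbrev R (n : ℕ) : Type := MvPolynomial (Fin n × Fin n) ℂ

/-- The action of `S_n` on `R_n`: `g.X_{ab} = X_{g(a) g(b)}`. -/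
noncomputable def permAct {n : ℕ} (g : Equiv.Perm (Fin n)) (p : R n) : R n :=
  MvPolynomial.rename (fun ab => (g ab.1, g ab.2)) p

/-- The twisted group algebra `A(S_n) = R_n ⋊ ℂ[S_n]`, as formal `R_n`-linear
combinations of permutations. -/
abbrev A (n : ℕ) : Type := Equiv.Perm (Fin n) →₀ R n

/-- The identity element `id = 1·id` of `A(S_n)`. -/
noncomputable instance {n : ℕ} : One (A n) := ⟨Finsupp.single 1 1⟩

/-- The twisted multiplication `(p₁ g₁)·(p₂ g₂) = (p₁ · (g₁.p₂)) g₁g₂` on `A(S_n)`. -/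
noncomputable instance {n : ℕ} : Mul (A n) :=
  ⟨fun x y => x.sum fun g₁ p₁ => y.sum fun g₂ p₂ =>
    Finsupp.single (g₁ * g₂) (p₁ * permAct g₁ p₂)⟩

/-- The set of inversions `I(g) = {(a,b) : a < b, g(a) > g(b)}`. -/
def inversions {n : ℕ} (g : Equiv.Perm (Fin n)) : Finset (Fin n × Fin n) :=
  Finset.univ.filter fun ab => ab.1 < ab.2 ∧ g ab.2 < g ab.1

/-- The monomial `X_g = ∏_{(a,b) ∈ I(g⁻¹)} X_{ab}`. -/
noncomputable def Xg {n : ℕ} (g : Equiv.Perm (Fin n)) : R n :=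
  ∏ ab ∈ inversions g⁻¹, MvPolynomial.X ab

/-- The element `g* = X_g · g ∈ A(S_n)`. -/
noncomputable def gstar {n : ℕ} (g : Equiv.Perm (Fin n)) : A n :=
  Finsupp.single g (Xg g)

/-- The cycle `t_{k,j}` sending `m ↦ m+1` for `j ≤ m ≤ k-1` and `k ↦ j`,
fixing all points outside `[j,k]` (meaningful for `j ≤ k`). -/
def cyc {n : ℕ} [NeZero n] (k j : Fin n) : Equiv.Perm (Fin n) :=
  Equiv.permCongr (Equiv.addLeft j) (Fin.cycleRange (k - j))

section Helpers
variable {n : ℕ} [NeZero n]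


lemma fin_sub_val_of_le {j x : Fin n} (h : j ≤ x) : (x - j).val = x.val - j.val := by
  rw [Fin.sub_def]
  simp only [Fin.le_def] at h
  have hx := x.isLt
  have h1 : n - j.val + x.val = n + (x.val - j.val) := by omega
  simp only [h1, Nat.add_mod_left]
  exact Nat.mod_eq_of_lt (by omega)

lemma fin_sub_val_of_lt {j x : Fin n} (h : x < j) : (x - j).val = n + x.val - j.val := by
  rw [Fin.sub_def]
  simp only [Fin.lt_def] at h
  have hj := j.isLt
  simp only [Fin.val_mk]
  rw [Nat.mod_eq_of_lt (by omega)]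
  omega

lemma fin_add_val (j y : Fin n) : (j + y).val = (j.val + y.val) % n := rfl

lemma cyc_unfold (k j x : Fin n) : (Equiv.permCongr (Equiv.addLeft j) (Fin.cycleRange (k - j))) x
    = j + (Fin.cycleRange (k - j)) (x - j) := by
  simp [Equiv.permCongr_apply, sub_eq_neg_add]

lemma cyc_apply_of_lt {k j x : Fin n} (hjk : j ≤ k) (hx : x < j) : cyc k j x = x := by
  obtain ⟨m, rfl⟩ := Nat.exists_eq_succ_of_ne_zero (NeZero.ne n)
  rw [cyc, cyc_unfold]
  have h1 : k - j < x - j := by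
    rw [Fin.lt_def, fin_sub_val_of_le hjk, fin_sub_val_of_lt hx]
    have := k.isLt; simp only [Fin.lt_def, Fin.le_def] at hx hjk; omega
  rw [Fin.cycleRange_of_gt h1]
  apply Fin.ext
  rw [fin_add_val, fin_sub_val_of_lt hx]
  simp only [Fin.lt_def, Fin.le_def] at hx hjk
  have hxl := x.isLt
  have h2 : (j.val + (m + 1 + x.val - j.val)) = (m+1) + x.val := by omega
  rw [h2, Nat.add_mod_left, Nat.mod_eq_of_lt hxl]

lemma cyc_apply_of_gt {k j x : Fin n} (hjk : j ≤ k) (hx : k < x) : cyc k j x = x := by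
  obtain ⟨m, rfl⟩ := Nat.exists_eq_succ_of_ne_zero (NeZero.ne n)
  have hjx : j ≤ x := le_trans hjk (le_of_lt hx)
  rw [cyc, cyc_unfold]
  have h1 : k - j < x - j := by
    rw [Fin.lt_def, fin_sub_val_of_le hjk, fin_sub_val_of_le hjx]
    simp only [Fin.lt_def, Fin.le_def] at hx hjk hjx; omega
  rw [Fin.cycleRange_of_gt h1]
  apply Fin.ext
  rw [fin_add_val, fin_sub_val_of_le hjx]
  simp only [Fin.le_def] at hjx
  have hxl := x.isLt
  have h2 : (j.val + (x.val - j.val)) = x.val := by omega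
  rw [h2, Nat.mod_eq_of_lt hxl]

lemma cyc_apply_self {k j : Fin n} (hjk : j ≤ k) : cyc k j k = j := by
  obtain ⟨m, rfl⟩ := Nat.exists_eq_succ_of_ne_zero (NeZero.ne n)
  rw [cyc, cyc_unfold, Fin.cycleRange_self]
  apply Fin.ext
  rw [fin_add_val, Fin.val_zero, Nat.add_zero, Nat.mod_eq_of_lt j.isLt]

lemma cyc_apply_mid {k j x : Fin n} (hjx : j ≤ x) (hx : x < k) :
    cyc k j x = ⟨x.val + 1, by have := k.isLt; simp only [Fin.lt_def] at hx; omega⟩ := by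
  obtain ⟨m, rfl⟩ := Nat.exists_eq_succ_of_ne_zero (NeZero.ne n)
  rw [cyc, cyc_unfold]
  have h1 : x - j < k - j := by
    rw [Fin.lt_def, fin_sub_val_of_le hjx, fin_sub_val_of_le (le_trans hjx (le_of_lt hx))]
    simp only [Fin.lt_def, Fin.le_def] at hx hjx; omega
  rw [Fin.cycleRange_of_lt h1]
  apply Fin.ext
  have hkl := k.isLt
  simp only [Fin.lt_def, Fin.le_def] at hx hjx
  have hv : ((x - j) + 1).val = x.val - j.val + 1 := by
    rw [fin_add_val, fin_sub_val_of_le (by exact hjx), Fin.val_one']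
    rw [Nat.mod_eq_of_lt (show 1 < m+1 by omega)]
    exact Nat.mod_eq_of_lt (by omega)
  rw [fin_add_val, hv]
  simp only [Fin.val_mk]
  rw [Nat.mod_eq_of_lt (by omega)]
  omega

lemma cyc_inv_of_lt {k j x : Fin n} (hjk : j ≤ k) (hx : x < j) : (cyc k j)⁻¹ x = x := by
  rw [Equiv.Perm.inv_eq_iff_eq, cyc_apply_of_lt hjk hx]

lemma cyc_inv_of_gt {k j x : Fin n} (hjk : j ≤ k) (hx : k < x) : (cyc k j)⁻¹ x = x := by
  rw [Equiv.Perm.inv_eq_iff_eq, cyc_apply_of_gt hjk hx]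

lemma cyc_inv_self {k j : Fin n} (hjk : j ≤ k) : (cyc k j)⁻¹ j = k := by
  rw [Equiv.Perm.inv_eq_iff_eq, cyc_apply_self hjk]

lemma cyc_inv_mid {k j z : Fin n} (h1 : j < z) (h2 : z ≤ k) :
    (cyc k j)⁻¹ z = ⟨z.val - 1, by have := z.isLt; omega⟩ := by
  rw [Equiv.Perm.inv_eq_iff_eq]
  have hjz : j ≤ (⟨z.val - 1, by have := z.isLt; omega⟩ : Fin n) := by
    simp only [Fin.le_def, Fin.lt_def] at h1 ⊢; omega
  have hzk : (⟨z.val - 1, by have := z.isLt; omega⟩ : Fin n) < k := by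
    simp only [Fin.lt_def, Fin.le_def] at h1 h2 ⊢; omega
  rw [cyc_apply_mid hjz hzk]
  apply Fin.ext
  simp only [Fin.lt_def] at h1
  simp only [Fin.val_mk]
  omega

lemma cyc_inv_val {k j : Fin n} (hjk : j ≤ k) (z : Fin n) :
    ((cyc k j)⁻¹ z).val = if z.val < j.val then z.val else if z.val = j.val then k.val
      else if z.val ≤ k.val then z.val - 1 else z.val := by
  split_ifs with h1 h2 h3
  · rw [cyc_inv_of_lt hjk (Fin.lt_def.mpr h1)]
  · rw [show z = j from Fin.ext h2, cyc_inv_self hjk]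
  · rw [cyc_inv_mid (Fin.lt_def.mpr (by omega)) (Fin.le_def.mpr h3)]
  · rw [cyc_inv_of_gt hjk (Fin.lt_def.mpr (by omega))]

lemma inversions_cyc_inv {k j : Fin n} (hjk : j ≤ k) :
    inversions (cyc k j)⁻¹ =
      Finset.univ.filter (fun p : Fin n × Fin n => p.1 = j ∧ j < p.2 ∧ p.2 ≤ k) := by
  ext ⟨x, y⟩
  simp only [inversions, Finset.mem_filter, Finset.mem_univ, true_and, Fin.lt_def, Fin.le_def,
    Fin.ext_iff]
  have hx := cyc_inv_val hjk x
  have hy := cyc_inv_val hjk y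
  simp only [Fin.le_def] at hjk
  have := j.isLt; have := k.isLt; have := x.isLt; have := y.isLt
  split_ifs at hx hy <;> omega

lemma swap_adj_val {a : Fin n} (h : a.val + 1 < n) (u : Fin n) :
    (Equiv.swap a ⟨a.val+1, h⟩ u).val =
      if u.val = a.val then a.val+1 else if u.val = a.val+1 then a.val else u.val := by
  rw [Equiv.swap_apply_def]
  split_ifs <;> simp only [Fin.ext_iff, Fin.val_mk] at * <;> omega

lemma swap_adj_lt_iff {a : Fin n} (h : a.val + 1 < n) (u v : Fin n) :
    Equiv.swap a ⟨a.val+1, h⟩ u < Equiv.swap a ⟨a.val+1, h⟩ v ↔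
      (u = ⟨a.val+1, h⟩ ∧ v = a) ∨ (u < v ∧ ¬(u = a ∧ v = ⟨a.val+1, h⟩)) := by
  rw [Fin.lt_def, swap_adj_val h u, swap_adj_val h v]
  simp only [Fin.lt_def, Fin.ext_iff, Fin.val_mk, not_and]
  split_ifs <;> omega

lemma notMem_inversions {a : Fin n} (h : a.val + 1 < n) (p : Equiv.Perm (Fin n)) :
    (p⁻¹ a, p⁻¹ ⟨a.val+1, h⟩) ∉ inversions p := by
  simp only [inversions, Finset.mem_filter, Finset.mem_univ, true_and, not_and,
    Equiv.Perm.coe_inv, Equiv.apply_symm_apply]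
  intro _
  simp only [Fin.lt_def, Fin.val_mk, not_lt]
  omega

lemma inversions_swap_mul {a : Fin n} (h : a.val + 1 < n) (p : Equiv.Perm (Fin n))
    (hp : p⁻¹ a < p⁻¹ ⟨a.val+1, h⟩) :
    inversions (Equiv.swap a ⟨a.val+1, h⟩ * p) =
      insert (p⁻¹ a, p⁻¹ ⟨a.val+1, h⟩) (inversions p) := by
  set a' : Fin n := ⟨a.val+1, h⟩ with ha'
  have haa' : a < a' := by simp only [Fin.lt_def, ha', Fin.val_mk]; omega
  ext ⟨x, y⟩
  simp only [inversions, Finset.mem_filter, Finset.mem_univ, true_and, Finset.mem_insert,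
    Prod.mk.injEq]
  simp only [Equiv.Perm.mul_apply]
  rw [swap_adj_lt_iff h (p y) (p x)]
  constructor
  · rintro ⟨hxy, (⟨hy, hx⟩ | ⟨hlt, hne⟩)⟩
    · left
      constructor
      · rw [← hx, Equiv.Perm.coe_inv, Equiv.symm_apply_apply]
      · rw [ha', ← hy, Equiv.Perm.coe_inv, Equiv.symm_apply_apply]
    · right; exact ⟨hxy, hlt⟩
  · rintro (⟨hx, hy⟩ | ⟨hxy, hlt⟩)
    · subst hx; subst hy
      refine ⟨hp, Or.inl ⟨?_, ?_⟩⟩ <;> simp [ha']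
    · refine ⟨hxy, Or.inr ⟨hlt, ?_⟩⟩
      rintro ⟨hya, hxa'⟩
      have : x = p⁻¹ a' := by rw [ha', ← hxa', Equiv.Perm.coe_inv, Equiv.symm_apply_apply]
      have hy' : y = p⁻¹ a := by rw [← hya, Equiv.Perm.coe_inv, Equiv.symm_apply_apply]
      subst this; subst hy'
      exact absurd hxy (not_lt.mpr (le_of_lt hp))

end Helpers

open Finset in
lemma inversions_one {n : ℕ} : inversions (1 : Equiv.Perm (Fin n)) = ∅ := by
  ext ⟨x, y⟩
  simp only [inversions, Finset.mem_filter, Finset.mem_univ, true_and, Finset.notMem_empty,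
    iff_false, not_and]
  simp only [Equiv.Perm.one_apply]
  exact fun h => not_lt.mpr (le_of_lt h)

lemma Xg_one {n : ℕ} : Xg (1 : Equiv.Perm (Fin n)) = 1 := by
  rw [Xg, inv_one, inversions_one, Finset.prod_empty]

lemma Xg_cyc {n : ℕ} [NeZero n] {k j : Fin n} (hjk : j ≤ k) :
    Xg (cyc k j) = ∏ i ∈ Finset.univ.filter (fun i => j < i ∧ i ≤ k),
      (MvPolynomial.X (j, i) : R n) := by
  rw [Xg, inversions_cyc_inv hjk]
  rw [show (Finset.univ.filter (fun p : Fin n × Fin n => p.1 = j ∧ j < p.2 ∧ p.2 ≤ k)) =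
      Finset.image (fun i => (j, i)) (Finset.univ.filter (fun i => j < i ∧ i ≤ k)) by
    ext ⟨x, y⟩
    simp only [Finset.mem_filter, Finset.mem_univ, true_and, Finset.mem_image, Prod.mk.injEq]
    constructor
    · rintro ⟨rfl, h1, h2⟩; exact ⟨y, ⟨h1, h2⟩, rfl, rfl⟩
    · rintro ⟨i, ⟨h1, h2⟩, rfl, rfl⟩; exact ⟨rfl, h1, h2⟩]
  rw [Finset.prod_image]
  intro i _ i' _ hii'
  exact ((Prod.mk.injEq _ _ _ _).mp hii').2

lemma Xg_mul_swap {n : ℕ} [NeZero n] {a : Fin n} (h : a.val + 1 < n) (g : Equiv.Perm (Fin n))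
    (hg : g a < g ⟨a.val+1, h⟩) :
    Xg (g * Equiv.swap a ⟨a.val+1, h⟩) = MvPolynomial.X (g a, g ⟨a.val+1, h⟩) * Xg g := by
  rw [Xg, Xg, mul_inv_rev, Equiv.swap_inv]
  have key := inversions_swap_mul h g⁻¹ (by rw [inv_inv]; exact hg)
  rw [inv_inv] at key
  rw [key, Finset.prod_insert (by have := notMem_inversions h g⁻¹; rwa [inv_inv] at this)]

lemma Xg_flip {n : ℕ} [NeZero n] {a : Fin n} (h : a.val + 1 < n) (g : Equiv.Perm (Fin n))
    (hg : g ⟨a.val+1, h⟩ < g a) :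
    Xg g = MvPolynomial.X (g ⟨a.val+1, h⟩, g a) * Xg (g * Equiv.swap a ⟨a.val+1, h⟩) := by
  have key := Xg_mul_swap h (g * Equiv.swap a ⟨a.val+1, h⟩) (by
    simp only [Equiv.Perm.mul_apply, Equiv.swap_apply_left, Equiv.swap_apply_right]
    exact hg)
  rw [mul_assoc, Equiv.swap_mul_self, mul_one] at key
  simpa only [Equiv.Perm.mul_apply, Equiv.swap_apply_left, Equiv.swap_apply_right] using key

lemma Xg_swap {n : ℕ} [NeZero n] {a : Fin n} (h : a.val + 1 < n) :
    Xg (Equiv.swap a ⟨a.val+1, h⟩) = MvPolynomial.X (a, (⟨a.val+1, h⟩ : Fin n)) := by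
  have key := Xg_mul_swap h 1 (by
    simp only [Equiv.Perm.one_apply]
    exact Fin.lt_def.mpr (by simp only [Fin.val_mk]; omega))
  simpa only [one_mul, Equiv.Perm.one_apply, Xg_one, mul_one] using key

lemma permAct_X {n : ℕ} (g : Equiv.Perm (Fin n)) (ab : Fin n × Fin n) :
    permAct g (MvPolynomial.X ab) = MvPolynomial.X (g ab.1, g ab.2) := by
  rw [permAct, MvPolynomial.rename_X]

lemma permAct_mul_poly {n : ℕ} (g : Equiv.Perm (Fin n)) (p q : R n) :
    permAct g (p * q) = permAct g p * permAct g q := map_mul _ _ _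

lemma permAct_one_poly {n : ℕ} (g : Equiv.Perm (Fin n)) : permAct g (1 : R n) = 1 := map_one _

lemma permAct_permAct {n : ℕ} (g h : Equiv.Perm (Fin n)) (p : R n) :
    permAct g (permAct h p) = permAct (g * h) p := by
  rw [permAct, permAct, permAct, MvPolynomial.rename_rename]
  rfl

lemma single_mul {n : ℕ} (g₁ g₂ : Equiv.Perm (Fin n)) (p q : R n) :
    (Finsupp.single g₁ p * Finsupp.single g₂ q : A n) =
      Finsupp.single (g₁ * g₂) (p * permAct g₁ q) := by
  show Finsupp.sum _ _ = _
  rw [Finsupp.sum_single_index, Finsupp.sum_single_index]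
  · rw [show permAct g₁ (0 : R n) = 0 from map_zero _, mul_zero, Finsupp.single_zero]
  · rw [Finsupp.sum_single_index] <;>
      simp only [zero_mul, Finsupp.single_zero, map_zero, mul_zero]

lemma smul_single' {n : ℕ} (c : R n) (g : Equiv.Perm (Fin n)) (q : R n) :
    c • (Finsupp.single g q : A n) = Finsupp.single g (c * q) := by
  rw [Finsupp.smul_single, smul_eq_mul]

lemma cyc_self_eq_one {n : ℕ} [NeZero n] (k : Fin n) : cyc k k = 1 := by
  ext x
  rcases lt_trichotomy x k with hx | rfl | hx
  · rw [cyc_apply_of_lt le_rfl hx, Equiv.Perm.one_apply]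
  · rw [cyc_apply_self le_rfl, Equiv.Perm.one_apply]
  · rw [cyc_apply_of_gt le_rfl hx, Equiv.Perm.one_apply]

lemma cyc_decomp {n : ℕ} [NeZero n] {a b : Fin n} (hab : a < b) (h : a.val + 1 < n) :
    cyc b a = Equiv.swap a ⟨a.val+1, h⟩ * cyc b ⟨a.val+1, h⟩ := by
  set a' : Fin n := ⟨a.val+1, h⟩ with ha'
  have hab' : a.val < b.val := Fin.lt_def.mp hab
  have haa' : a < a' := Fin.lt_def.mpr (by simp [ha'])
  have ha'b : a' ≤ b := Fin.le_def.mpr (by simp only [ha', Fin.val_mk]; omega)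
  ext x
  rw [Equiv.Perm.mul_apply]
  rcases lt_trichotomy x a with hx | rfl | hx
  · rw [cyc_apply_of_lt (le_of_lt hab) hx, cyc_apply_of_lt ha'b (lt_trans hx haa'),
      Equiv.swap_apply_of_ne_of_ne (ne_of_lt hx) (ne_of_lt (lt_trans hx haa'))]
  · rw [cyc_apply_mid le_rfl hab, cyc_apply_of_lt ha'b haa', Equiv.swap_apply_left]
  · rcases lt_trichotomy x b with hxb | rfl | hxb
    · have ha'x : a' ≤ x := Fin.le_def.mpr (by simp only [ha', Fin.val_mk]; exact Fin.lt_def.mp hx)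
      have h1 : (⟨x.val+1, by have := b.isLt; have := Fin.lt_def.mp hxb; omega⟩ : Fin n) ≠ a :=
        Fin.ne_of_val_ne (by simp only [Fin.val_mk]; have := Fin.lt_def.mp hx; omega)
      have h2 : (⟨x.val+1, by have := b.isLt; have := Fin.lt_def.mp hxb; omega⟩ : Fin n) ≠ a' :=
        Fin.ne_of_val_ne (by simp only [ha', Fin.val_mk]; have := Fin.le_def.mp ha'x; omega)
      rw [cyc_apply_mid (le_of_lt hx) hxb, cyc_apply_mid ha'x hxb,
        Equiv.swap_apply_of_ne_of_ne h1 h2]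
    · rw [cyc_apply_self (le_of_lt hab), cyc_apply_self ha'b, Equiv.swap_apply_right]
    · rw [cyc_apply_of_gt (le_of_lt hab) hxb, cyc_apply_of_gt ha'b hxb,
        Equiv.swap_apply_of_ne_of_ne (ne_of_gt (lt_trans hab hxb))
          (ne_of_gt (lt_of_le_of_lt ha'b hxb))]

lemma gstar_cyc_decomp {n : ℕ} [NeZero n] {a b : Fin n} (hab : a < b) (h : a.val + 1 < n) :
    gstar (cyc b a) = gstar (Equiv.swap a ⟨a.val+1, h⟩) * gstar (cyc b ⟨a.val+1, h⟩) := by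
  set a' : Fin n := ⟨a.val+1, h⟩ with ha'
  have haa' : a < a' := Fin.lt_def.mpr (by simp [ha'])
  have ha'b : a' ≤ b := Fin.le_def.mpr (by simp only [ha', Fin.val_mk]; exact Fin.lt_def.mp hab)
  rw [gstar, gstar, gstar, single_mul, ← cyc_decomp hab h]
  congr 1
  rw [Xg_swap h, Xg_cyc (le_of_lt hab), Xg_cyc ha'b, permAct, map_prod]
  have hprod : ∀ i ∈ Finset.univ.filter (fun i => a' < i ∧ i ≤ b),
      (MvPolynomial.rename (fun ab => ((Equiv.swap a a') ab.1, (Equiv.swap a a') ab.2))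
        (MvPolynomial.X (a', i)) : R n) = MvPolynomial.X (a, i) := by
    intro i hi
    simp only [Finset.mem_filter, Finset.mem_univ, true_and] at hi
    rw [MvPolynomial.rename_X, Equiv.swap_apply_right,
      Equiv.swap_apply_of_ne_of_ne (ne_of_gt (lt_trans haa' hi.1)) (ne_of_gt hi.1)]
  rw [Finset.prod_congr rfl hprod]
  have hset : Finset.univ.filter (fun i => a < i ∧ i ≤ b) =
      insert a' (Finset.univ.filter (fun i => a' < i ∧ i ≤ b)) := by
    ext i
    simp only [Finset.mem_filter, Finset.mem_univ, true_and, Finset.mem_insert]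
    simp only [Fin.lt_def, Fin.le_def, Fin.ext_iff, ha', Fin.val_mk]
    have := Fin.lt_def.mp hab
    omega
  rw [hset, Finset.prod_insert (by simp [Finset.mem_filter])]

lemma gstar_mul_swap {n : ℕ} [NeZero n] {a : Fin n} (h : a.val + 1 < n)
    (g : Equiv.Perm (Fin n)) :
    gstar g * gstar (Equiv.swap a ⟨a.val+1, h⟩) =
      (if g ⟨a.val+1, h⟩ < g a then
        (MvPolynomial.X (g a, g ⟨a.val+1, h⟩) * MvPolynomial.X (g ⟨a.val+1, h⟩, g a) : R n)
      else 1) • gstar (g * Equiv.swap a ⟨a.val+1, h⟩) := by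
  set a' : Fin n := ⟨a.val+1, h⟩ with ha'
  have hne : g a ≠ g a' := fun hh => by
    have := g.injective hh
    rw [Fin.ext_iff] at this
    simp only [ha', Fin.val_mk] at this
    omega
  rw [gstar, gstar, gstar, single_mul, Xg_swap h, permAct_X]
  rcases lt_or_gt_of_ne hne with hlt | hgt
  · rw [if_neg (not_lt.mpr (le_of_lt hlt)), one_smul, Xg_mul_swap h g hlt, mul_comm]
  · rw [if_pos hgt, smul_single']
    congr 1
    rw [Xg_flip h g hgt]
    ring

/-- for any `g ∈ S_n` and `a < b`,
`g*·t_{b,a}* = (∏_{a<j≤b, g(a)>g(j)} X_{g(a)g(j)}X_{g(j)g(a)}) · (g·t_{b,a})*`. -/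
theorem gstar_mul_cycle_general {n : ℕ} [NeZero n] (a b : Fin n) (hab : a < b)
    (g : Equiv.Perm (Fin n)) :
    gstar g * gstar (cyc b a) =
      (∏ j ∈ Finset.univ.filter (fun j : Fin n => a < j ∧ j ≤ b ∧ g j < g a),
          (MvPolynomial.X (g a, g j) * MvPolynomial.X (g j, g a) : R n)) •
        gstar (g * cyc b a) := by
  suffices H : ∀ (d : ℕ) (a : Fin n) (g : Equiv.Perm (Fin n)), a < b → b.val - a.val ≤ d →
      gstar g * gstar (cyc b a) =
      (∏ j ∈ Finset.univ.filter (fun j : Fin n => a < j ∧ j ≤ b ∧ g j < g a),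
          (MvPolynomial.X (g a, g j) * MvPolynomial.X (g j, g a) : R n)) •
        gstar (g * cyc b a) by
    exact H (b.val - a.val) a g hab le_rfl
  intro d
  induction d with
  | zero =>
    intro a g hab hd
    exact absurd hd (by have := Fin.lt_def.mp hab; omega)
  | succ d ih =>
    intro a g hab hd
    have habv := Fin.lt_def.mp hab
    have hbn := b.isLt
    have h : a.val + 1 < n := by omega
    have haa' : a < (⟨a.val + 1, h⟩ : Fin n) := Fin.lt_def.mpr (by simp only [Fin.val_mk]; omega)
    have ha'b : (⟨a.val + 1, h⟩ : Fin n) ≤ b := Fin.le_def.mpr (by simp only [Fin.val_mk]; omega)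
    rw [gstar_cyc_decomp hab h]
    have hassoc : gstar g * (gstar (Equiv.swap a (⟨a.val + 1, h⟩ : Fin n)) * gstar (cyc b (⟨a.val + 1, h⟩ : Fin n))) =
        (gstar g * gstar (Equiv.swap a (⟨a.val + 1, h⟩ : Fin n))) * gstar (cyc b (⟨a.val + 1, h⟩ : Fin n)) := by
      rw [gstar, gstar, gstar, single_mul, single_mul, single_mul, single_mul]
      rw [mul_assoc, permAct_mul_poly, permAct_permAct, mul_assoc]
    rw [hassoc, gstar_mul_swap h g]
    have hsmulmul : ∀ (c : R n) (x y : Equiv.Perm (Fin n)),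
        (c • gstar x) * gstar y = c • (gstar x * gstar y) := by
      intro c x y
      rw [gstar, gstar, smul_single', single_mul, single_mul, smul_single', mul_assoc]
    rw [hsmulmul]
    by_cases hb' : (⟨a.val + 1, h⟩ : Fin n) = b
    · have hcyc1 : cyc b (⟨a.val + 1, h⟩ : Fin n) = 1 := by rw [← hb', cyc_self_eq_one]
      have hone : gstar (g * Equiv.swap a (⟨a.val + 1, h⟩ : Fin n)) * gstar (cyc b (⟨a.val + 1, h⟩ : Fin n)) =
          gstar (g * Equiv.swap a (⟨a.val + 1, h⟩ : Fin n)) := by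
        rw [hcyc1, gstar, gstar, Xg_one, single_mul, permAct_one_poly, mul_one, mul_one]
      rw [hone, cyc_decomp hab h, hcyc1, mul_one]
      congr 1
      by_cases hga : g (⟨a.val + 1, h⟩ : Fin n) < g a
      · rw [if_pos hga]
        have hT : Finset.univ.filter (fun j : Fin n => a < j ∧ j ≤ b ∧ g j < g a) = {(⟨a.val + 1, h⟩ : Fin n)} := by
          ext i
          simp only [Finset.mem_filter, Finset.mem_univ, true_and, Finset.mem_singleton]
          constructor
          · rintro ⟨h1, h2, h3⟩
            have h1v := Fin.lt_def.mp h1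
            have h2v := Fin.le_def.mp h2
            have hbv : b.val = a.val + 1 := by rw [← hb']
            exact Fin.ext (by simp only [Fin.val_mk]; omega)
          · rintro rfl
            exact ⟨haa', ha'b, hga⟩
        rw [hT, Finset.prod_singleton]
      · rw [if_neg hga]
        have hT : Finset.univ.filter (fun j : Fin n => a < j ∧ j ≤ b ∧ g j < g a) = ∅ := by
          ext i
          simp only [Finset.mem_filter, Finset.mem_univ, true_and, Finset.notMem_empty,
            iff_false, not_and]
          intro h1 h2 h3
          have h1v := Fin.lt_def.mp h1
          have h2v := Fin.le_def.mp h2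
          have hbv : b.val = a.val + 1 := by rw [← hb']
          have : i = (⟨a.val + 1, h⟩ : Fin n) := Fin.ext (by simp only [Fin.val_mk]; omega)
          rw [this] at h3
          exact hga h3
        rw [hT, Finset.prod_empty]
    · have hb'lt : (⟨a.val + 1, h⟩ : Fin n) < b := lt_of_le_of_ne ha'b hb'
      have key := ih (⟨a.val + 1, h⟩ : Fin n) (g * Equiv.swap a (⟨a.val + 1, h⟩ : Fin n)) hb'lt (by simp only [Fin.val_mk]; omega)
      have hgs_a' : (g * Equiv.swap a (⟨a.val + 1, h⟩ : Fin n)) (⟨a.val + 1, h⟩ : Fin n) = g a := by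
        rw [Equiv.Perm.mul_apply, Equiv.swap_apply_right]
      have hfix : ∀ j : Fin n, (⟨a.val + 1, h⟩ : Fin n) < j → (g * Equiv.swap a (⟨a.val + 1, h⟩ : Fin n)) j = g j := by
        intro j hj
        rw [Equiv.Perm.mul_apply,
          Equiv.swap_apply_of_ne_of_ne (ne_of_gt (lt_trans haa' hj)) (ne_of_gt hj)]
      have hsetIH : Finset.univ.filter
            (fun j : Fin n => (⟨a.val + 1, h⟩ : Fin n) < j ∧ j ≤ b ∧ (g * Equiv.swap a (⟨a.val + 1, h⟩ : Fin n)) j < (g * Equiv.swap a (⟨a.val + 1, h⟩ : Fin n)) (⟨a.val + 1, h⟩ : Fin n))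
          = Finset.univ.filter (fun j : Fin n => (⟨a.val + 1, h⟩ : Fin n) < j ∧ j ≤ b ∧ g j < g a) := by
        apply Finset.filter_congr
        intro j _
        by_cases hj : (⟨a.val + 1, h⟩ : Fin n) < j
        · simp only [hj, true_and, hfix j hj, hgs_a']
        · simp only [hj, false_and]
      rw [hsetIH] at key
      have hprodIH : ∏ j ∈ Finset.univ.filter (fun j : Fin n => (⟨a.val + 1, h⟩ : Fin n) < j ∧ j ≤ b ∧ g j < g a),
            (MvPolynomial.X ((g * Equiv.swap a (⟨a.val + 1, h⟩ : Fin n)) (⟨a.val + 1, h⟩ : Fin n), (g * Equiv.swap a (⟨a.val + 1, h⟩ : Fin n)) j) *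
              MvPolynomial.X ((g * Equiv.swap a (⟨a.val + 1, h⟩ : Fin n)) j, (g * Equiv.swap a (⟨a.val + 1, h⟩ : Fin n)) (⟨a.val + 1, h⟩ : Fin n)) : R n)
          = ∏ j ∈ Finset.univ.filter (fun j : Fin n => (⟨a.val + 1, h⟩ : Fin n) < j ∧ j ≤ b ∧ g j < g a),
            (MvPolynomial.X (g a, g j) * MvPolynomial.X (g j, g a) : R n) := by
        apply Finset.prod_congr rfl
        intro j hj
        simp only [Finset.mem_filter, Finset.mem_univ, true_and] at hj
        rw [hgs_a', hfix j hj.1]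
      rw [hprodIH] at key
      have hgrp : g * Equiv.swap a (⟨a.val + 1, h⟩ : Fin n) * cyc b (⟨a.val + 1, h⟩ : Fin n) = g * cyc b a := by
        rw [mul_assoc, ← cyc_decomp hab h]
      rw [hgrp] at key
      rw [key, smul_smul]
      congr 1
      by_cases hga : g (⟨a.val + 1, h⟩ : Fin n) < g a
      · rw [if_pos hga]
        have hT : Finset.univ.filter (fun j : Fin n => a < j ∧ j ≤ b ∧ g j < g a) =
            insert (⟨a.val + 1, h⟩ : Fin n) (Finset.univ.filter (fun j : Fin n => (⟨a.val + 1, h⟩ : Fin n) < j ∧ j ≤ b ∧ g j < g a)) := by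
          ext i
          simp only [Finset.mem_filter, Finset.mem_univ, true_and, Finset.mem_insert]
          constructor
          · rintro ⟨h1, h2, h3⟩
            by_cases hia : i = (⟨a.val + 1, h⟩ : Fin n)
            · exact Or.inl hia
            · refine Or.inr ⟨?_, h2, h3⟩
              have h1v := Fin.lt_def.mp h1
              have hne : i.val ≠ a.val + 1 := fun hh => hia (Fin.ext (by simp only [Fin.val_mk]; omega))
              exact Fin.lt_def.mpr (by simp only [Fin.val_mk]; omega)
          · rintro (rfl | ⟨h1, h2, h3⟩)
            · exact ⟨haa', ha'b, hga⟩
            · exact ⟨lt_trans haa' h1, h2, h3⟩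
        rw [hT, Finset.prod_insert (by simp)]
      · rw [if_neg hga, one_mul]
        congr 1
        ext i
        simp only [Finset.mem_filter, Finset.mem_univ, true_and]
        constructor
        · rintro ⟨h1, h2, h3⟩
          exact ⟨lt_trans haa' h1, h2, h3⟩
        · rintro ⟨h1, h2, h3⟩
          refine ⟨?_, h2, h3⟩
          have hia : i ≠ (⟨a.val + 1, h⟩ : Fin n) := fun hh => hga (hh ▸ h3)
          have h1v := Fin.lt_def.mp h1
          have hne : i.val ≠ a.val + 1 := fun hh => hia (Fin.ext hh)
          exact Fin.lt_def.mpr (by simp only [Fin.val_mk]; omega)
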